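/- Let μ be a nontrivial symmetric weakly stable probability measure on ℝ, let λ be μ-weakly infinitely divisible, let {λ^r : r ≥ 0} be a convolution semigroup family for (μ,λ), and let t_n ↘ 0. Then for every t ∈ ℝ, the characteristic function of μ∘λ satisfies (μ∘λ)^(t) = lim_{n→∞} exp( − ∫_ℝ (1 − μ̂(ts)) t_n^{−1} λ^{t_n}(ds) ). -/

import Mathlib

open MeasureTheory Filter Topology ENNReal BoundedContinuousFunction

noncomputable section

/-- `T_c μ`: pushforward of `μ` under `x ↦ c * x`. -/
def rescale (c : ℝ) (μ : Measure ℝ) : Measure ℝ := μ.map (fun x => c * x)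

/-- Scale mixture `μ ∘ ν`: pushforward of `μ × ν` under `(x, s) ↦ x * s`. -/
def mix (μ ν : Measure ℝ) : Measure ℝ := (μ.prod ν).map (fun p => p.1 * p.2)

/-- Convolution of two measures on `ℝ`. -/
def mconv (μ ν : Measure ℝ) : Measure ℝ := (μ.prod ν).map (fun p => p.1 + p.2)

/-- `n`-fold convolution power, with the convention that the 0th power is `δ_0`. -/
def convPow (μ : Measure ℝ) : ℕ → Measure ℝ
  | 0 => Measure.dirac 0
  | n + 1 => mconv (convPow μ n) μ

/-- A probability measure `μ` on `ℝ` is weakly stable if for all `a b : ℝ` there is a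
probability measure `lam` with `(T_a μ) ∗ (T_b μ) = μ ∘ lam`. -/
def WeaklyStable (μ : Measure ℝ) : Prop :=
  ∀ a b : ℝ, ∃ lam : Measure ℝ, IsProbabilityMeasure lam ∧
    mconv (rescale a μ) (rescale b μ) = mix μ lam

/-- `μ` is nontrivial: it has no atoms. -/
def NontrivialMeasure (μ : Measure ℝ) : Prop := ∀ x : ℝ, μ {x} = 0

/-- `μ` is symmetric: `T_{-1} μ = μ`. -/
def SymmetricMeasure (μ : Measure ℝ) : Prop := rescale (-1) μ = μ

/-- `lam` is `μ`-weakly infinitely divisible: for every `n ≥ 1` there is a probability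
measure `ν` concentrated on `[0, ∞)` with `(μ ∘ ν)^{∗ n} = μ ∘ lam`. -/
def MuWeaklyInfDiv (μ lam : Measure ℝ) : Prop :=
  ∀ n : ℕ, 1 ≤ n → ∃ ν : Measure ℝ, IsProbabilityMeasure ν ∧ ν (Set.Iio 0) = 0 ∧
    convPow (mix μ ν) n = mix μ lam

/-- Characteristic function of a measure on `ℝ`. -/
def charFun' (μ : Measure ℝ) (t : ℝ) : ℂ := ∫ x, Complex.exp (t * x * Complex.I) ∂μ

/-- Weak convergence of a sequence of measures on `ℝ`. -/
def WeakTendsto (μs : ℕ → Measure ℝ) (μ : Measure ℝ) : Prop :=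
  ∀ f : ℝ →ᵇ ℝ, Tendsto (fun n => ∫ x, f x ∂(μs n)) atTop (𝓝 (∫ x, f x ∂μ))

/-- A convolution semigroup family for `(μ, lam)`. -/
def ConvSemigroupFamily (μ lam : Measure ℝ) (L : ℝ → Measure ℝ) : Prop :=
  (∀ r : ℝ, 0 ≤ r → IsProbabilityMeasure (L r)) ∧
  L 0 = Measure.dirac 0 ∧ L 1 = lam ∧
  (∀ r s : ℝ, 0 ≤ r → 0 ≤ s → mconv (mix μ (L r)) (mix μ (L s)) = mix μ (L (r + s))) ∧
  (∀ f : ℝ →ᵇ ℝ, Tendsto (fun r => ∫ x, f x ∂(L r)) (𝓝[>] (0 : ℝ)) (𝓝 (f 0)))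

/-- `C_#`: bounded continuous functions vanishing on a neighborhood of `0`. -/
def CSharp (f : ℝ →ᵇ ℝ) : Prop := ∃ ε > (0 : ℝ), ∀ x : ℝ, |x| < ε → f x = 0

/-- `κ(μ) = sup {p ∈ [0,2] : ∫ |x|^p μ(dx) < ∞}` (with `sup ∅ = 0` in `ℝ`). -/
def kappa (μ : Measure ℝ) : ℝ :=
  sSup {p : ℝ | p ∈ Set.Icc (0 : ℝ) 2 ∧ ∫⁻ x, ENNReal.ofReal (|x| ^ p) ∂μ < ∞}

section AuxStmt10
open Complex

lemma norm_exp_aux (a b : ℝ) : ‖Complex.exp ((a:ℂ) * b * Complex.I)‖ = 1 := by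
  rw [Complex.norm_exp]
  simp

lemma norm_charFun'_le_one (μ : Measure ℝ) [IsProbabilityMeasure μ] (t : ℝ) :
    ‖charFun' μ t‖ ≤ 1 := by
  refine (norm_integral_le_integral_norm _).trans ?_
  simp_rw [norm_exp_aux]
  simp

lemma continuous_charFun' (μ : Measure ℝ) [IsProbabilityMeasure μ] :
    Continuous (charFun' μ) := by
  unfold charFun'
  refine continuous_of_dominated (F := fun (t x : ℝ) => Complex.exp ((t:ℂ) * (x:ℂ) * Complex.I))
    (bound := fun _ => 1) ?_ ?_ ?_ ?_
  · intro t
    exact (Continuous.aestronglyMeasurable (by continuity))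
  · intro t
    exact Eventually.of_forall fun x => le_of_eq (norm_exp_aux t x)
  · exact integrable_const 1
  · exact Eventually.of_forall fun x => by continuity

lemma exp_integrable (ρ : Measure (ℝ × ℝ)) [IsProbabilityMeasure ρ] (f : ℝ × ℝ → ℝ)
    (hf : Continuous f) : Integrable (fun p => Complex.exp ((f p : ℂ) * Complex.I)) ρ := by
  refine (integrable_const (1:ℝ)).mono' (Continuous.aestronglyMeasurable (by continuity)) ?_
  refine Eventually.of_forall fun p => ?_
  simpa using le_of_eq (norm_exp_aux 1 (f p))

lemma charFun'_mix (μ ν : Measure ℝ) [IsProbabilityMeasure μ] [IsProbabilityMeasure ν] (s : ℝ) :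
    charFun' (mix μ ν) s = ∫ u, charFun' μ (s * u) ∂ν := by
  have hswap : mix μ ν = (ν.prod μ).map (fun p => p.2 * p.1) := by
    rw [mix, ← Measure.prod_swap, Measure.map_map (by fun_prop) (by fun_prop)]
    rfl
  rw [charFun', hswap, integral_map (by fun_prop) (Continuous.aestronglyMeasurable (by continuity))]
  have : ∀ p : ℝ × ℝ, Complex.exp ((s:ℂ) * ((p.2 * p.1 : ℝ) : ℂ) * Complex.I)
      = Complex.exp ((((s * p.1) * p.2 : ℝ) : ℂ) * Complex.I) := by
    intro p; push_cast; ring_nf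
  simp_rw [this]
  rw [integral_prod _ (by
    have := exp_integrable (ν.prod μ) (fun p => s * p.1 * p.2) (by continuity)
    simpa using this)]
  congr 1
  ext u
  rw [charFun']
  congr 1
  ext x
  push_cast
  ring_nf

lemma charFun'_mconv (α β : Measure ℝ) [IsProbabilityMeasure α] [IsProbabilityMeasure β] (s : ℝ) :
    charFun' (mconv α β) s = charFun' α s * charFun' β s := by
  rw [charFun', mconv, integral_map (by fun_prop) (Continuous.aestronglyMeasurable (by continuity))]
  have : ∀ p : ℝ × ℝ, Complex.exp ((s:ℂ) * ((p.1 + p.2 : ℝ) : ℂ) * Complex.I)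
      = Complex.exp ((s:ℂ) * (p.1:ℂ) * Complex.I) * Complex.exp ((s:ℂ) * (p.2:ℂ) * Complex.I) := by
    intro p
    rw [← Complex.exp_add]
    push_cast
    ring_nf
  simp_rw [this]
  rw [integral_prod _ (by
    have h1 := exp_integrable (α.prod β) (fun p => s * p.1) (by continuity)
    have h2 := exp_integrable (α.prod β) (fun p => s * p.2) (by continuity)
    refine (integrable_const (1:ℝ)).mono' (Continuous.aestronglyMeasurable (by continuity)) ?_
    refine Eventually.of_forall fun p => ?_
    rw [norm_mul, norm_exp_aux, norm_exp_aux]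
    norm_num)]
  simp_rw [integral_const_mul]
  rw [integral_mul_const]
  rfl

lemma charFun'_zero (μ : Measure ℝ) [IsProbabilityMeasure μ] : charFun' μ 0 = 1 := by
  simp [charFun']

instance mix_prob (μ ν : Measure ℝ) [IsProbabilityMeasure μ] [IsProbabilityMeasure ν] :
    IsProbabilityMeasure (mix μ ν) := by
  rw [mix]
  exact Measure.isProbabilityMeasure_map (by fun_prop)

lemma charFun'_im (μ : Measure ℝ) [IsProbabilityMeasure μ] (hsym : SymmetricMeasure μ) (t : ℝ) :
    charFun' μ t = ((charFun' μ t).re : ℂ) := by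
  have h : (starRingEnd ℂ) (charFun' μ t) = charFun' μ t := by
    rw [charFun', ← integral_conj]
    have : ∀ x : ℝ, (starRingEnd ℂ) (Complex.exp ((t:ℂ) * x * Complex.I))
        = Complex.exp ((t:ℂ) * ((-1 : ℝ) * x : ℝ) * Complex.I) := by
      intro x
      rw [← Complex.exp_conj]
      congr 1
      push_cast
      push_cast
      simp [Complex.conj_I]
    simp_rw [this]
    have h2 : (∫ x : ℝ, Complex.exp ((t:ℂ) * (((-1:ℝ)*x : ℝ) : ℂ) * Complex.I) ∂μ)
        = charFun' (rescale (-1) μ) t :=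
      (integral_map (φ := fun x : ℝ => (-1:ℝ)*x)
        (f := fun y : ℝ => Complex.exp ((t:ℂ)*y*Complex.I))
        (by fun_prop) (Continuous.aestronglyMeasurable (by continuity))).symm
    rw [h2, hsym]
    rfl
  exact (Complex.conj_eq_iff_re.mp h).symm

lemma G_pos (G : ℝ → ℝ) (h0 : G 0 = 1)
    (hmul : ∀ r r' : ℝ, 0 ≤ r → 0 ≤ r' → G (r + r') = G r * G r')
    (hcont : Tendsto G (𝓝[>] 0) (𝓝 1)) :
    ∀ r : ℝ, 0 ≤ r → 0 < G r := by
  have hnn : ∀ r : ℝ, 0 ≤ r → 0 ≤ G r := by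
    intro r hr
    have := hmul (r/2) (r/2) (by linarith) (by linarith)
    rw [show r/2 + r/2 = r by ring] at this
    rw [this]
    exact mul_self_nonneg _
  intro r hr
  rcases eq_or_lt_of_le (hnn r hr) with h | h
  · exfalso
    rcases eq_or_lt_of_le hr with h0' | h0'
    · rw [← h0'] at h; rw [h0] at h; exact one_ne_zero h.symm
    have key : ∀ n : ℕ, G (r / 2 ^ n) = 0 := by
      intro n
      induction n with
      | zero => simpa using h.symm
      | succ n ih =>
        have h2 := hmul (r / 2 ^ (n+1)) (r / 2 ^ (n+1))
          (div_nonneg hr (by positivity)) (div_nonneg hr (by positivity))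
        rw [show r / 2 ^ (n+1) + r / 2 ^ (n+1) = r / 2 ^ n by ring] at h2
        rw [ih] at h2
        exact (mul_self_eq_zero).mp h2.symm
    have htend : Tendsto (fun n : ℕ => r / 2 ^ n) atTop (𝓝[>] 0) := by
      apply tendsto_nhdsWithin_of_tendsto_nhds_of_eventually_within
      · simpa using tendsto_const_nhds.div_atTop
          (tendsto_pow_atTop_atTop_of_one_lt (by norm_num : (1:ℝ) < 2))
      · exact Eventually.of_forall fun n => Set.mem_Ioi.mpr (div_pos h0' (by positivity))
    have := hcont.comp htend
    simp_rw [Function.comp_def, key] at this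
    exact zero_ne_one (tendsto_nhds_unique tendsto_const_nhds this)
  · exact h

lemma G_rpow (G : ℝ → ℝ) (h0 : G 0 = 1)
    (hmul : ∀ r r' : ℝ, 0 ≤ r → 0 ≤ r' → G (r + r') = G r * G r')
    (hcont : Tendsto G (𝓝[>] 0) (𝓝 1)) :
    ∀ r : ℝ, 0 ≤ r → G r = (G 1) ^ r := by
  have hpos := G_pos G h0 hmul hcont
  have hc1 : 0 < G 1 := hpos 1 zero_le_one
  have hnat : ∀ (n : ℕ) (r : ℝ), 0 ≤ r → G (n * r) = G r ^ n := by
    intro n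
    induction n with
    | zero => intro r _; simpa using h0
    | succ n ih =>
      intro r hr
      have : ((n:ℝ)+1) * r = n * r + r := by ring
      rw [Nat.cast_succ, this, hmul (n*r) r (by positivity) hr, ih r hr, pow_succ]
  have hrat : ∀ (p n : ℕ), 0 < n → G ((p:ℝ)/n) = (G 1) ^ ((p:ℝ)/n) := by
    intro p n hn
    have hn' : (0:ℝ) < n := by exact_mod_cast hn
    have ha : 0 < G ((p:ℝ)/n) := hpos _ (by positivity)
    have h1 : G ((p:ℝ)/n) ^ n = (G 1) ^ p := by
      rw [← hnat n ((p:ℝ)/n) (by positivity), mul_div_cancel₀ _ (ne_of_gt hn'),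
        show (p:ℝ) = p * 1 by ring, hnat p 1 zero_le_one]
    have step : G ((p:ℝ)/n) = ((G ((p:ℝ)/n)) ^ (n:ℝ)) ^ ((n:ℝ)⁻¹) := by
      rw [← Real.rpow_mul ha.le, mul_inv_cancel₀ (ne_of_gt hn'), Real.rpow_one]
    calc G ((p:ℝ)/n) = ((G ((p:ℝ)/n)) ^ (n:ℝ)) ^ ((n:ℝ)⁻¹) := step
      _ = ((G 1 : ℝ) ^ (p:ℝ)) ^ ((n:ℝ)⁻¹) := by
          rw [Real.rpow_natCast, h1, Real.rpow_natCast]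
      _ = (G 1) ^ ((p:ℝ) * ((n:ℝ)⁻¹)) := by rw [← Real.rpow_mul hc1.le]
      _ = (G 1) ^ ((p:ℝ)/n) := by rw [div_eq_mul_inv]
  intro r hr
  rcases eq_or_lt_of_le hr with h | h
  · rw [← h]; simp [h0]
  set c := G 1 with hc
  set a : ℕ → ℝ := fun k => (⌊r * (k+1)⌋₊ : ℝ) / (k+1) with ha
  have hak_nonneg : ∀ k, 0 ≤ a k := fun k => by positivity
  have hak_le : ∀ k, a k ≤ r := by
    intro k
    rw [ha]
    rw [div_le_iff₀ (by positivity)]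
    exact (Nat.floor_le (by positivity)).trans (le_of_eq rfl)
  have hgap : ∀ k : ℕ, r - a k < 1 / (k+1) := by
    intro k
    have := Nat.lt_floor_add_one (r * (k+1))
    rw [ha]
    rw [sub_lt_iff_lt_add, ← add_div, lt_div_iff₀ (by positivity : (0:ℝ) < (k:ℝ)+1)]
    linarith
  have hatend : Tendsto a atTop (𝓝 r) := by
    have h1 : Tendsto (fun k : ℕ => r - 1/((k:ℝ)+1)) atTop (𝓝 r) := by
      simpa using (tendsto_const_nhds : Tendsto (fun _ : ℕ => r) atTop (𝓝 r)).sub tendsto_one_div_add_atTop_nhds_zero_nat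
    refine tendsto_of_tendsto_of_tendsto_of_le_of_le h1 tendsto_const_nhds ?_ hak_le
    intro k
    have := hgap k
    simp only
    linarith
  have hGa : ∀ k, G (a k) = c ^ (a k) := by
    intro k
    have := hrat (⌊r * (k+1)⌋₊) (k+1) (Nat.succ_pos k)
    simpa [ha] using this
  have hgap0 : Tendsto (fun k => G (r - a k)) atTop (𝓝 1) := by
    have hGc : Tendsto G (𝓝[≥] 0) (𝓝 1) := by
      rw [show Set.Ici (0:ℝ) = {0} ∪ Set.Ioi 0 from (Set.union_comm _ _ ▸ Set.Ioi_union_left.symm)]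
      rw [nhdsWithin_union, nhdsWithin_singleton]
      rw [tendsto_sup]
      constructor
      · simpa [h0] using tendsto_pure_nhds G 0
      · exact hcont
    apply hGc.comp
    apply tendsto_nhdsWithin_of_tendsto_nhds_of_eventually_within
    · have : Tendsto (fun k => r - a k) atTop (𝓝 (r - r)) := tendsto_const_nhds.sub hatend
      simpa using this
    · exact Eventually.of_forall fun k => Set.mem_Ici.mpr (sub_nonneg.mpr (hak_le k))
  have hGr : ∀ k, G r = c ^ (a k) * G (r - a k) := by
    intro k
    rw [← hGa k, ← hmul (a k) (r - a k) (hak_nonneg k) (by linarith [hak_le k])]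
    congr 1
    ring
  have hctend : Tendsto (fun k => c ^ (a k)) atTop (𝓝 (c ^ r)) := by
    have hcont' : Continuous (fun x : ℝ => c ^ x) := by
      have : (fun x : ℝ => c ^ x) = fun x => Real.exp (Real.log c * x) := by
        ext x; rw [Real.rpow_def_of_pos hc1]
      rw [this]
      continuity
    exact (hcont'.tendsto r).comp hatend
  have : Tendsto (fun k => c ^ (a k) * G (r - a k)) atTop (𝓝 (c ^ r * 1)) :=
    hctend.mul hgap0
  rw [mul_one] at this
  simp_rw [← hGr] at this
  exact tendsto_nhds_unique tendsto_const_nhds this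

end AuxStmt10

theorem stmt10 (μ lam : Measure ℝ)
    (hμ : IsProbabilityMeasure μ) (hnt : NontrivialMeasure μ)
    (hsym : SymmetricMeasure μ) (hws : WeaklyStable μ)
    (hlam : IsProbabilityMeasure lam) (hdiv : MuWeaklyInfDiv μ lam)
    (L : ℝ → Measure ℝ) (hL : ConvSemigroupFamily μ lam L)
    (t : ℕ → ℝ) (htpos : ∀ n, 0 < t n) (htanti : StrictAnti t)
    (ht0 : Tendsto t atTop (𝓝 0)) :
    ∀ s : ℝ,
      Tendsto (fun n =>
          Complex.exp (-(((t n : ℝ) : ℂ))⁻¹ * ∫ u, (1 - charFun' μ (s * u)) ∂(L (t n))))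
        atTop (𝓝 (charFun' (mix μ lam) s)) := by
  obtain ⟨hL1, hL2, hL3, hL4, hL5⟩ := hL
  intro s
  classical
  set g : ℝ → ℝ := fun u => (charFun' μ (s * u)).re with hg
  have hreal : ∀ u : ℝ, charFun' μ (s * u) = ((g u : ℝ) : ℂ) := fun u => charFun'_im μ hsym (s*u)
  have hgcont : Continuous g := by
    exact Complex.continuous_re.comp ((continuous_charFun' μ).comp (continuous_const.mul continuous_id))
  have hgbd : ∀ u, ‖g u‖ ≤ 1 := by
    intro u
    calc ‖g u‖ = |(charFun' μ (s*u)).re| := rfl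
      _ ≤ ‖charFun' μ (s*u)‖ := Complex.abs_re_le_norm _
      _ ≤ 1 := norm_charFun'_le_one μ _
  have hg0 : g 0 = 1 := by
    simp only [hg, mul_zero]
    rw [charFun'_zero μ]
    rfl
  set G : ℝ → ℝ := fun r => ∫ u, g u ∂(L r) with hGdef
  have hF : ∀ r : ℝ, 0 ≤ r → charFun' (mix μ (L r)) s = ((G r : ℝ) : ℂ) := by
    intro r hr
    haveI := hL1 r hr
    rw [charFun'_mix]
    simp_rw [hreal]
    exact integral_ofReal
  have h0 : G 0 = 1 := by
    rw [hGdef]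
    simp only [hL2]
    rw [integral_dirac]
    exact hg0
  have hmul : ∀ r r' : ℝ, 0 ≤ r → 0 ≤ r' → G (r + r') = G r * G r' := by
    intro r r' hr hr'
    haveI := hL1 r hr; haveI := hL1 r' hr'; haveI := hL1 (r+r') (by linarith)
    haveI := mix_prob μ (L r); haveI := mix_prob μ (L r')
    have := congrArg (fun m => charFun' m s) (hL4 r r' hr hr')
    rw [charFun'_mconv, hF r hr, hF r' hr', hF (r+r') (by linarith)] at this
    exact_mod_cast this.symm
  have hcont : Tendsto G (𝓝[>] 0) (𝓝 1) := by
    set f : ℝ →ᵇ ℝ := BoundedContinuousFunction.ofNormedAddCommGroup g hgcont 1 hgbd with hf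
    have := hL5 f
    have hfeq : ∀ x, f x = g x := fun x => rfl
    simp_rw [hfeq] at this
    rw [hg0] at this
    exact this
  have hpos := G_pos G h0 hmul hcont
  have hrpow := G_rpow G h0 hmul hcont
  set c : ℝ := G 1 with hc
  have hc1 : 0 < c := hpos 1 zero_le_one
  -- target identification
  have htarget : charFun' (mix μ lam) s = ((c : ℝ) : ℂ) := by
    rw [← hL3]; exact hF 1 zero_le_one
  -- prelimit identification
  have hterm : ∀ n, Complex.exp (-(((t n : ℝ) : ℂ))⁻¹ * ∫ u, (1 - charFun' μ (s * u)) ∂(L (t n)))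
      = ((Real.exp ((G (t n) - 1) / t n) : ℝ) : ℂ) := by
    intro n
    haveI := hL1 (t n) (htpos n).le
    have hint : (∫ u, (1 - charFun' μ (s * u)) ∂(L (t n))) = (((1 - G (t n) : ℝ)) : ℂ) := by
      have : ∀ u : ℝ, (1 - charFun' μ (s * u)) = (((1 - g u : ℝ)) : ℂ) := by
        intro u; rw [hreal u]; push_cast; ring
      simp_rw [this]
      have hio : (∫ u, (((1 - g u : ℝ)) : ℂ) ∂(L (t n))) = ((∫ u, (1 - g u) ∂(L (t n)) : ℝ) : ℂ) :=
        integral_ofReal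
      rw [hio]
      congr 1
      have hgint : Integrable g (L (t n)) := by
        refine (integrable_const (1:ℝ)).mono' hgcont.aestronglyMeasurable ?_
        exact Eventually.of_forall hgbd
      rw [integral_sub (integrable_const 1) hgint]
      simp
      rfl
    rw [hint]
    have harg : -(((t n : ℝ) : ℂ))⁻¹ * (((1 - G (t n) : ℝ)) : ℂ)
        = (((G (t n) - 1) / t n : ℝ) : ℂ) := by
      have hne : ((t n : ℝ) : ℂ) ≠ 0 := Complex.ofReal_ne_zero.mpr (ne_of_gt (htpos n))
      push_cast
      rw [eq_div_iff hne]
      field_simp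
      ring
    rw [harg, ← Complex.ofReal_exp]
  -- real limit
  have hlim : Tendsto (fun n => Real.exp ((G (t n) - 1) / t n)) atTop (𝓝 c) := by
    set f : ℝ → ℝ := fun x => Real.exp (Real.log c * x) with hfd
    have hfG : ∀ n, G (t n) = f (t n) := by
      intro n
      rw [hrpow (t n) (htpos n).le, hfd]
      simp only
      rw [Real.rpow_def_of_pos hc1]
    have hderiv : HasDerivAt f (Real.log c) 0 := by
      have h1 : HasDerivAt (fun x : ℝ => Real.log c * x) (Real.log c) 0 := by
        simpa using (hasDerivAt_id (0:ℝ)).const_mul (Real.log c)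
      simpa using h1.exp
    rw [hasDerivAt_iff_tendsto_slope] at hderiv
    have httend : Tendsto t atTop (𝓝[≠] (0:ℝ)) := by
      apply tendsto_nhdsWithin_of_tendsto_nhds_of_eventually_within _ ht0
      exact Eventually.of_forall fun n => (ne_of_gt (htpos n))
    have hslope := hderiv.comp httend
    have hslope_eq : ∀ n, slope f 0 (t n) = (G (t n) - 1) / t n := by
      intro n
      rw [slope_def_field, hfG n]
      simp [hfd]
    have : Tendsto (fun n => (G (t n) - 1) / t n) atTop (𝓝 (Real.log c)) := by
      have := hslope
      simp_rw [Function.comp_def, hslope_eq] at this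
      exact this
    have := (Real.continuous_exp.tendsto _).comp this
    rw [Real.exp_log hc1] at this
    exact this
  rw [htarget]
  have : Tendsto (fun n => ((Real.exp ((G (t n) - 1) / t n) : ℝ) : ℂ)) atTop (𝓝 ((c:ℝ):ℂ)) :=
    (Complex.continuous_ofReal.tendsto c).comp hlim
  have hfun : (fun n => Complex.exp (-(((t n : ℝ) : ℂ))⁻¹ * ∫ u, (1 - charFun' μ (s * u)) ∂(L (t n))))
      = fun n => ((Real.exp ((G (t n) - 1) / t n) : ℝ) : ℂ) := funext hterm
  rw [hfun]
  exact this
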